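/- arXiv:1704.06314 — 3 statements merged into one kernel-verified Lean document; each statement's English description precedes it below -/
import Mathlib

section
/- For every γ > 0 there is n₀ ∈ ℕ such that for all n ≥ n₀ and all reals ε with 2^{−(2α−1)n/2} ≤ ε ≤ 1/6: if f is drawn from the distribution D_yes, then the probability that f is a k-junta (with k = ⌊αn⌋) is at least 1 − γ. -/
open Finset

/-- `f : {0,1}^n → {0,1}` is a `k`-junta: there is a set `S ⊆ [n]` with `|S| ≤ k`
such that `f x = f y` whenever `x` and `y` agree on all coordinates in `S`. -/
def IsJunta (n k : ℕ) (f : (Fin n → Bool) → Bool) : Prop :=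
  ∃ S : Finset (Fin n), S.card ≤ k ∧
    ∀ x y : Fin n → Bool, (∀ i ∈ S, x i = y i) → f x = f y

/-- `f` is `ε`-far from every `k`-junta. -/
def FarFromJuntas (n k : ℕ) (ε : ℝ) (f : (Fin n → Bool) → Bool) : Prop :=
  ∀ g : (Fin n → Bool) → Bool, IsJunta n k g →
    ε * 2 ^ n ≤ ((Finset.univ.filter (fun x => f x ≠ g x)).card : ℝ)

/-- Probability of obtaining exactly the subset `A` when each element of `U` is included
independently with probability `ρ` (and elements outside `U` are never included). -/
noncomputable def pSet {ι : Type*} [DecidableEq ι] (U : Finset ι) (ρ : ℝ) (A : Finset ι) : ℝ :=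
  if A ⊆ U then ρ ^ A.card * (1 - ρ) ^ (U.card - A.card) else 0

/-- Zero out the coordinates outside `M`.  Two strings have the same `padTo M` iff they
agree on all coordinates of `M`, so `padTo M x` serves as the index `Γ_M(x)`:
it identifies the restriction `x|_M`. -/
def padTo {n : ℕ} (M : Finset (Fin n)) (x : Fin n → Bool) : Fin n → Bool :=
  fun j => if j ∈ M then x j else false

/-- The function `f = f_{M,S,H}` built from the addressing set `M`, the family of subsets
`S_i ⊆ A` and the family of random functions `h_i(x) = z_i(x|_{S_i})`: on input `x`, the
index `i = Γ_M(x)` (represented by `padTo M x`) selects `S_i` and `z_i`, and the value is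
`z_i` evaluated at the restriction of `x` to `S_i` (represented by `padTo (S i) x`). -/
def buildF {n : ℕ} (M : Finset (Fin n)) (S : (Fin n → Bool) → Finset (Fin n))
    (z : (Fin n → Bool) → (Fin n → Bool) → Bool) : (Fin n → Bool) → Bool :=
  fun x => z (padTo M x) (padTo (S (padTo M x)) x)

open Classical in
/-- The probability, for fixed `M` and `A`, that the random function `f` obtained by
sampling each `S_i ⊆ A` (elements included independently with probability `ρ`) and
each `h_i` a uniformly random function of the coordinates in `S_i`, satisfies `E f`. -/
noncomputable def prSH (n : ℕ) (M A : Finset (Fin n)) (ρ : ℝ)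
    (E : ((Fin n → Bool) → Bool) → Prop) : ℝ :=
  ∑ S : (Fin n → Bool) → Finset (Fin n),
    ∑ z : (Fin n → Bool) → (Fin n → Bool) → Bool,
      (if E (buildF M S z) then 1 else 0) * (∏ y : Fin n → Bool, pSet A ρ (S y)) /
        (Fintype.card ((Fin n → Bool) → (Fin n → Bool) → Bool) : ℝ)

/-- The probability that a random function `f` drawn from the distribution `D` (with
`M` a uniformly random subset of `[n]` of size `t`, `A ⊆ [n]∖M` with each element
included independently with probability `ρA`, each `S_i ⊆ A` with rate `ρS`, and each
`h_i` a uniformly random function of the coordinates in `S_i`) satisfies `E f`.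
Taking `ρA = 1/2` gives `D_yes`; taking `ρA = 1/2 + (log₂ n)/√n` gives `D_no`. -/
noncomputable def prD (n t : ℕ) (ρA ρS : ℝ)
    (E : ((Fin n → Bool) → Bool) → Prop) : ℝ :=
  (∑ M ∈ Finset.univ.filter (fun M : Finset (Fin n) => M.card = t),
    ∑ A : Finset (Fin n), pSet Mᶜ ρA A * prSH n M A ρS E) / (n.choose t : ℝ)


section Helpers
open Real Filter

lemma pSet_nonneg {ι : Type*} [DecidableEq ι] (U : Finset ι) {ρ : ℝ}
    (h0 : 0 ≤ ρ) (h1 : ρ ≤ 1) (A : Finset ι) : 0 ≤ pSet U ρ A := by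
  unfold pSet
  split
  · exact mul_nonneg (pow_nonneg h0 _) (pow_nonneg (by linarith) _)
  · exact le_refl _

lemma sum_pSet_mul {ι : Type*} [DecidableEq ι] [Fintype ι] (U : Finset ι) {ρ : ℝ}
    (w : ℕ → ℝ) :
    ∑ A : Finset ι, pSet U ρ A * w A.card
      = ∑ A ∈ U.powerset, ρ ^ A.card * (1-ρ) ^ (U.card - A.card) * w A.card := by
  classical
  rw [← Finset.sum_filter_add_sum_filter_not Finset.univ (fun A => A ⊆ U)]
  have h2 : ∑ A ∈ Finset.univ.filter (fun A => ¬ A ⊆ U), pSet U ρ A * w A.card = 0 := by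
    apply Finset.sum_eq_zero
    intro A hA
    simp only [Finset.mem_filter] at hA
    simp [pSet, hA.2]
  rw [h2, add_zero]
  apply Finset.sum_congr
  · ext A; simp [Finset.mem_powerset]
  · intro A hA
    have hAU := Finset.mem_powerset.mp hA
    simp [pSet, hAU]

lemma sum_pSet {ι : Type*} [DecidableEq ι] [Fintype ι] (U : Finset ι) (ρ : ℝ) :
    ∑ A : Finset ι, pSet U ρ A = 1 := by
  classical
  have h1 := sum_pSet_mul U (ρ := ρ) (fun _ => (1:ℝ))
  simp only [mul_one] at h1
  have h := Finset.prod_add (fun _ : ι => ρ) (fun _ : ι => (1 - ρ)) U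
  simp only [prod_const, add_sub_cancel, one_pow] at h
  rw [h1]
  calc ∑ A ∈ U.powerset, ρ ^ A.card * (1-ρ) ^ (U.card - A.card)
      = ∑ A ∈ U.powerset, ρ ^ A.card * (1-ρ) ^ (U \ A).card := by
        apply Finset.sum_congr rfl
        intro A hA
        rw [Finset.card_sdiff_of_subset (Finset.mem_powerset.mp hA)]
    _ = 1 := h.symm

lemma prSH_nonneg {n : ℕ} (M A : Finset (Fin n)) {ρ : ℝ} (h0 : 0 ≤ ρ) (h1 : ρ ≤ 1)
    (E : ((Fin n → Bool) → Bool) → Prop) : 0 ≤ prSH n M A ρ E := by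
  unfold prSH
  apply Finset.sum_nonneg; intro S _
  apply Finset.sum_nonneg; intro z _
  apply div_nonneg
  · apply mul_nonneg
    · split <;> norm_num
    · exact Finset.prod_nonneg fun y _ => pSet_nonneg A h0 h1 _
  · positivity

lemma prSH_eq_one {n : ℕ} (M A : Finset (Fin n)) {ρ : ℝ} (h0 : 0 ≤ ρ) (h1 : ρ ≤ 1)
    (E : ((Fin n → Bool) → Bool) → Prop)
    (hE : ∀ S z, (∀ y, S y ⊆ A) → E (buildF M S z)) :
    prSH n M A ρ E = 1 := by
  classical
  unfold prSH
  have hcard : (0:ℝ) < (Fintype.card ((Fin n → Bool) → (Fin n → Bool) → Bool) : ℝ) := by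
    exact_mod_cast Fintype.card_pos
  have key : ∀ S : (Fin n → Bool) → Finset (Fin n),
      (∑ z : (Fin n → Bool) → (Fin n → Bool) → Bool,
        (if E (buildF M S z) then (1:ℝ) else 0) * (∏ y : Fin n → Bool, pSet A ρ (S y)) /
          (Fintype.card ((Fin n → Bool) → (Fin n → Bool) → Bool) : ℝ))
      = ∏ y : Fin n → Bool, pSet A ρ (S y) := by
    intro S
    by_cases hS : ∀ y, S y ⊆ A
    · have : ∀ z, (if E (buildF M S z) then (1:ℝ) else 0) = 1 := fun z => if_pos (hE S z hS)
      simp only [this, one_mul]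
      rw [Finset.sum_const, Finset.card_univ, nsmul_eq_mul]
      field_simp
    · obtain ⟨y, hy⟩ := not_forall.mp hS
      have hz : (∏ y : Fin n → Bool, pSet A ρ (S y)) = 0 :=
        Finset.prod_eq_zero (Finset.mem_univ y) (by simp [pSet, hy])
      simp [hz]
  rw [Finset.sum_congr rfl (fun S _ => key S)]
  have := Fintype.prod_sum (fun (_ : Fin n → Bool) (T : Finset (Fin n)) => pSet A ρ T)
  rw [← this]
  simp [sum_pSet]

lemma isJunta_buildF {n : ℕ} (M A : Finset (Fin n)) (S : (Fin n → Bool) → Finset (Fin n))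
    (z : (Fin n → Bool) → (Fin n → Bool) → Bool) (hS : ∀ y, S y ⊆ A) {k : ℕ}
    (hk : (M ∪ A).card ≤ k) : IsJunta n k (buildF M S z) := by
  refine ⟨M ∪ A, hk, fun x y hxy => ?_⟩
  have hM : padTo M x = padTo M y := by
    funext j
    unfold padTo
    split
    · exact hxy j (Finset.mem_union_left _ ‹_›)
    · rfl
  unfold buildF
  rw [hM]
  congr 1
  funext j
  unfold padTo
  split
  · exact hxy j (Finset.mem_union_right _ (hS _ ‹_›))
  · rfl

lemma sum_pow_powerset {ι : Type*} [DecidableEq ι] (U : Finset ι) (lam : ℝ) :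
    ∑ A ∈ U.powerset, lam ^ A.card = (lam + 1) ^ U.card := by
  have h := Finset.prod_add (fun _ : ι => lam) (fun _ : ι => (1:ℝ)) U
  simp only [prod_const, one_pow, mul_one] at h
  exact h.symm

lemma sum_pSet_half_pow {ι : Type*} [DecidableEq ι] [Fintype ι] (U : Finset ι) (lam : ℝ) :
    ∑ A : Finset ι, pSet U (1/2) A * lam ^ A.card = ((lam + 1)/2) ^ U.card := by
  rw [sum_pSet_mul U (fun j => lam ^ j)]
  have : ∀ A ∈ U.powerset, (1/2:ℝ) ^ A.card * (1 - 1/2) ^ (U.card - A.card) * lam ^ A.card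
      = (1/2:ℝ) ^ U.card * lam ^ A.card := by
    intro A hA
    have hle := Finset.card_le_card (Finset.mem_powerset.mp hA)
    rw [show (1 - 1/2 : ℝ) = 1/2 by norm_num, ← pow_add, Nat.add_sub_cancel' hle]
  rw [Finset.sum_congr rfl this, ← Finset.mul_sum, sum_pow_powerset, ← mul_pow]
  congr 1
  ring

lemma per_M {n k : ℕ} (M : Finset (Fin n)) (htk : M.card ≤ k) {ρ : ℝ}
    (hρ0 : 0 ≤ ρ) (hρ1 : ρ ≤ 1) {lam : ℝ} (hlam : 1 ≤ lam) :
    1 - ((lam + 1)/2) ^ Mᶜ.card / lam ^ (k - M.card) ≤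
      ∑ A : Finset (Fin n), pSet Mᶜ (1/2) A * prSH n M A ρ (IsJunta n k) := by
  classical
  have hl0 : (0:ℝ) < lam := lt_of_lt_of_le one_pos hlam
  set g : Finset (Fin n) → ℝ := fun A => if M.card + A.card ≤ k then 1 else 0 with hg_def
  have step1 : ∑ A : Finset (Fin n), pSet Mᶜ (1/2) A * g A ≤
      ∑ A : Finset (Fin n), pSet Mᶜ (1/2) A * prSH n M A ρ (IsJunta n k) := by
    apply Finset.sum_le_sum
    intro A _
    by_cases hA : A ⊆ Mᶜ
    · by_cases hgood : M.card + A.card ≤ k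
      · have hdisj : Disjoint M A := by
          rw [Finset.disjoint_right]
          intro i hiA hiM
          exact (Finset.mem_compl.mp (hA hiA)) hiM
        have hone : prSH n M A ρ (IsJunta n k) = 1 := by
          apply prSH_eq_one M A hρ0 hρ1
          intro S z hS
          apply isJunta_buildF M A S z hS
          rw [Finset.card_union_of_disjoint hdisj]
          exact hgood
        rw [hone]
        simp [hg_def, hgood]
      · have : g A = 0 := by simp [hg_def, hgood]
        rw [this, mul_zero]
        exact mul_nonneg (pSet_nonneg _ (by norm_num) (by norm_num) _)
          (prSH_nonneg M A hρ0 hρ1 _)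
    · simp [pSet, hA]
  have hsum1 : ∑ A : Finset (Fin n), pSet Mᶜ (1/2) A * g A
      = 1 - ∑ A : Finset (Fin n), pSet Mᶜ (1/2) A * (1 - g A) := by
    have hsplit : ∀ A : Finset (Fin n), pSet Mᶜ (1/2) A * g A
        = pSet Mᶜ (1/2) A - pSet Mᶜ (1/2) A * (1 - g A) := fun A => by ring
    rw [Finset.sum_congr rfl (fun A _ => hsplit A), Finset.sum_sub_distrib, sum_pSet]
  have step3 : ∑ A : Finset (Fin n), pSet Mᶜ (1/2) A * (1 - g A) ≤
      ((lam + 1)/2) ^ Mᶜ.card / lam ^ (k - M.card) := by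
    rw [le_div_iff₀ (pow_pos hl0 _)]
    calc (∑ A : Finset (Fin n), pSet Mᶜ (1/2) A * (1 - g A)) * lam ^ (k - M.card)
        = ∑ A : Finset (Fin n), pSet Mᶜ (1/2) A * ((1 - g A) * lam ^ (k - M.card)) := by
          rw [Finset.sum_mul]; apply Finset.sum_congr rfl; intro A _; ring
      _ ≤ ∑ A : Finset (Fin n), pSet Mᶜ (1/2) A * lam ^ A.card := by
          apply Finset.sum_le_sum
          intro A _
          apply mul_le_mul_of_nonneg_left _ (pSet_nonneg _ (by norm_num) (by norm_num) _)
          by_cases hgood : M.card + A.card ≤ k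
          · simp [hg_def, hgood]
            positivity
          · have h1 : (1 : ℝ) - g A = 1 := by simp [hg_def, hgood]
            rw [h1, one_mul]
            exact pow_le_pow_right₀ hlam (by omega)
      _ = ((lam + 1)/2) ^ Mᶜ.card := sum_pSet_half_pow Mᶜ lam
  linarith

lemma chernoff_pow {u : ℝ} (hu : 0 ≤ u) (m s : ℕ) :
    ((1 + u + 1)/2) ^ m / (1 + u) ^ s ≤ Real.exp ((m:ℝ)*(u/2) - (s:ℝ)*(u - u^2)) := by
  have hu1 : (0:ℝ) < 1 + u := by linarith
  have h1 : ((1 + u + 1)/2) ^ m ≤ Real.exp ((m:ℝ)*(u/2)) := by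
    rw [Real.exp_nat_mul, show (1 + u + 1)/2 = 1 + u/2 by ring]
    exact pow_le_pow_left₀ (by linarith) (by linarith [Real.add_one_le_exp (u/2)]) m
  have hcore : Real.exp (u - u^2) ≤ 1 + u := by
    have hv : u - u^2 ≤ u/(1+u) := by
      rw [le_div_iff₀ hu1]; nlinarith
    have h2 : Real.exp (u/(1+u)) ≤ 1 + u := by
      have h3 := Real.add_one_le_exp (-(u/(1+u)))
      have h4 : -(u/(1+u)) + 1 = (1+u)⁻¹ := by field_simp; ring
      rw [h4, Real.exp_neg] at h3
      exact (inv_le_inv₀ hu1 (Real.exp_pos _)).mp h3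
    exact le_trans (Real.exp_le_exp.mpr hv) h2
  have h2 : Real.exp ((s:ℝ)*(u - u^2)) ≤ (1 + u) ^ s := by
    rw [Real.exp_nat_mul]
    exact pow_le_pow_left₀ (Real.exp_pos _).le hcore s
  calc ((1 + u + 1)/2) ^ m / (1 + u) ^ s
      ≤ Real.exp ((m:ℝ)*(u/2)) / Real.exp ((s:ℝ)*(u - u^2)) :=
        div_le_div₀ (Real.exp_pos _).le h1 (Real.exp_pos _) h2
    _ = Real.exp ((m:ℝ)*(u/2) - (s:ℝ)*(u - u^2)) := (Real.exp_sub _ _).symm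

lemma eventual_cond (α γ : ℝ) (hα₁ : 1/2 < α) (hα₂ : α < 1) (hγ : 0 < γ) :
    ∀ᶠ x : ℝ in atTop,
      1 ≤ x ∧ Real.logb 2 x ≤ Real.sqrt x ∧
      (1-α) * (Real.sqrt x * Real.logb 2 x) ≤ (2*α - 1)/2 * x ∧
      1/(1-α) ≤ x ∧
      Real.exp (1 - (1-α) * (Real.logb 2 x)^2 / 64) ≤ γ := by
  have hlo : (fun x : ℝ => Real.logb 2 x) =o[atTop] Real.sqrt := by
    have h1 := isLittleO_log_rpow_atTop (show (0:ℝ) < 1/2 by norm_num)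
    have h2 : (fun x : ℝ => Real.logb 2 x) =o[atTop] (fun x : ℝ => x ^ (1/2 : ℝ)) := by
      have h3 := h1.const_mul_left (Real.log 2)⁻¹
      refine h3.congr_left fun x => ?_
      rw [Real.logb, div_eq_inv_mul]
    simpa only [← Real.sqrt_eq_rpow] using h2
  have hdiv : Tendsto (fun x : ℝ => Real.logb 2 x / Real.sqrt x) atTop (nhds 0) :=
    hlo.tendsto_div_nhds_zero
  have hc : (0:ℝ) < (2*α-1)/(2*(1-α)) := by
    apply div_pos <;> linarith
  have ev1 : ∀ᶠ x : ℝ in atTop, Real.logb 2 x / Real.sqrt x ≤ 1 :=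
    hdiv.eventually (eventually_le_nhds one_pos)
  have ev2 : ∀ᶠ x : ℝ in atTop, Real.logb 2 x / Real.sqrt x ≤ (2*α-1)/(2*(1-α)) :=
    hdiv.eventually (eventually_le_nhds hc)
  have hLtop : Tendsto (fun x : ℝ => Real.logb 2 x) atTop atTop :=
    Real.tendsto_logb_atTop (by norm_num : (1:ℝ) < 2)
  set c₀ : ℝ := Real.sqrt (64 * max 0 (1 - Real.log γ) / (1-α)) with hc₀
  have ev3 : ∀ᶠ x : ℝ in atTop, c₀ ≤ Real.logb 2 x := hLtop.eventually_ge_atTop c₀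
  filter_upwards [eventually_ge_atTop (1:ℝ), ev1, ev2, eventually_ge_atTop (1/(1-α)),
    ev3] with x hx1 h1 h2 h4 h3
  have hx0 : (0:ℝ) ≤ x := by linarith
  have hr0 : (0:ℝ) < Real.sqrt x := Real.sqrt_pos.mpr (by linarith)
  have hrr : Real.sqrt x * Real.sqrt x = x := Real.mul_self_sqrt hx0
  have hL : Real.logb 2 x ≤ Real.sqrt x := by
    rw [div_le_one hr0] at h1; exact h1
  refine ⟨hx1, hL, ?_, h4, ?_⟩
  · have h5 : Real.sqrt x * Real.logb 2 x = x * (Real.logb 2 x / Real.sqrt x) := by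
      field_simp
      nlinarith [hrr]
    rw [h5]
    have h6 : x * (Real.logb 2 x / Real.sqrt x) ≤ x * ((2*α-1)/(2*(1-α))) :=
      mul_le_mul_of_nonneg_left h2 hx0
    calc (1-α) * (x * (Real.logb 2 x / Real.sqrt x)) ≤ (1-α) * (x * ((2*α-1)/(2*(1-α)))) :=
          mul_le_mul_of_nonneg_left h6 (by linarith)
      _ = (2*α-1)/2 * x := by
          field_simp [show (1:ℝ)-α ≠ 0 from by linarith]
  · have hc₀0 : 0 ≤ 64 * max 0 (1 - Real.log γ) / (1-α) := by
      apply div_nonneg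
      · have := le_max_left (0:ℝ) (1 - Real.log γ); positivity
      · linarith
    have hsq : c₀^2 = 64 * max 0 (1 - Real.log γ) / (1-α) := Real.sq_sqrt hc₀0
    have hL0 : 0 ≤ c₀ := Real.sqrt_nonneg _
    have hL2 : c₀^2 ≤ (Real.logb 2 x)^2 := by
      apply sq_le_sq' <;> nlinarith
    have hkey : 1 - Real.log γ ≤ (1-α) * (Real.logb 2 x)^2 / 64 := by
      have : 64 * max 0 (1 - Real.log γ) / (1-α) ≤ (Real.logb 2 x)^2 := by
        rw [← hsq]; exact hL2
      have h7 : 64 * max 0 (1 - Real.log γ) ≤ (1-α) * (Real.logb 2 x)^2 := by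
        rw [div_le_iff₀ (by linarith : (0:ℝ) < 1-α)] at this
        linarith [this]
      have h8 := le_max_right (0:ℝ) (1 - Real.log γ)
      linarith
    calc Real.exp (1 - (1-α) * (Real.logb 2 x)^2 / 64) ≤ Real.exp (Real.log γ) :=
          Real.exp_le_exp.mpr (by linarith)
      _ = γ := Real.exp_log hγ

lemma aux_ax (α x rL : ℝ) (hα₁ : 1/2 < α) (hx0 : 0 ≤ x)
    (h3a : (1-α) * rL ≤ (2*α-1)/2 * x) : 2*(1-α)*x + (1-α)*rL ≤ x := by
  nlinarith [mul_nonneg (show (0:ℝ) ≤ α - 1/2 by linarith) hx0]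

lemma aux_tk (α x mr kr rL : ℝ) (hδx1 : 1 ≤ (1-α)*x) (hrL : 0 ≤ (1-α)*rL)
    (hm_lb : 2*(1-α)*x + (1-α)*rL ≤ mr) (hk_lb : α*x - 1 ≤ kr) : x - mr ≤ kr := by
  nlinarith

lemma aux_s_lb (α x mr kr sr rL : ℝ) (hm_lb : 2*(1-α)*x + (1-α)*rL ≤ mr)
    (hk_lb : α*x - 1 ≤ kr) (hs : sr = kr - (x - mr)) :
    (1-α)*x + (1-α)*rL - 1 ≤ sr := by
  nlinarith

lemma aux_exponent (δ L r u mr sr : ℝ) (hδ0 : 0 < δ) (hL0 : 0 ≤ L)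
    (hru : r * u = L/8) (hu0 : 0 ≤ u) (hu8 : u ≤ 1/8)
    (hm_ub : mr ≤ 2*δ*r^2 + δ*r*L + 1)
    (hs_lb : δ*r^2 + δ*r*L - 1 ≤ sr) (hs_ub : sr ≤ mr) :
    mr*(u/2) - sr*(u - u^2) ≤ 1 - δ*L^2/64 := by
  have hu2 : 0 ≤ u^2 := sq_nonneg u
  have e1 : mr*(u/2) ≤ (2*δ*r^2 + δ*r*L + 1)*(u/2) :=
    mul_le_mul_of_nonneg_right hm_ub (by linarith)
  have e2 : (δ*r^2 + δ*r*L - 1)*u ≤ sr*u :=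
    mul_le_mul_of_nonneg_right hs_lb hu0
  have e3 : sr*u^2 ≤ (2*δ*r^2 + δ*r*L + 1)*u^2 :=
    mul_le_mul_of_nonneg_right (le_trans hs_ub hm_ub) hu2
  have hP : mr*(u/2) - sr*(u - u^2) ≤
      (2*δ*r^2 + δ*r*L + 1)*(u/2) - (δ*r^2 + δ*r*L - 1)*u + (2*δ*r^2 + δ*r*L + 1)*u^2 := by
    nlinarith [e1, e2, e3]
  have hQ : (2*δ*r^2 + δ*r*L + 1)*(u/2) - (δ*r^2 + δ*r*L - 1)*u + (2*δ*r^2 + δ*r*L + 1)*u^2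
      = -(δ*L*(r*u))/2 + (3/2)*u + 2*δ*(r*u)^2 + δ*L*(r*u)*u + u^2 := by ring
  rw [hru] at hQ
  have e4 : δ*L*(L/8)*u ≤ δ*L*(L/8)*(1/8) :=
    mul_le_mul_of_nonneg_left hu8 (by positivity)
  have e5 : u^2 ≤ 1/64 := by nlinarith
  have e6 : 0 ≤ δ*L^2 := by positivity
  rw [hQ] at hP
  nlinarith [hP, e4, e5, e6]

end Helpers

open Real Filter in
set_option maxHeartbeats 1000000 in
theorem stmt2 (α : ℝ) (hα₁ : 1 / 2 < α) (hα₂ : α < 1) (γ : ℝ) (hγ : 0 < γ) :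
    ∃ n₀ : ℕ, ∀ (n : ℕ) (ε : ℝ), n₀ ≤ n →
      (2 : ℝ) ^ (-((2 * α - 1) * (n : ℝ) / 2)) ≤ ε → ε ≤ 1 / 6 →
      ∀ m t : ℕ,
        m = ⌈2 * (1 - α) * (n : ℝ) + (1 - α) * Real.sqrt n * Real.logb 2 n⌉₊ →
        t = n - m →
        1 - γ ≤ prD n t (1 / 2) (ε / Real.sqrt n) (IsJunta n ⌊α * (n : ℝ)⌋₊) := by
  have hev := (tendsto_natCast_atTop_atTop (R := ℝ)).eventually
    (eventual_cond α γ (by linarith) hα₂ hγ)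
  obtain ⟨n₀, hn₀⟩ := eventually_atTop.mp hev
  refine ⟨n₀, fun n ε hn hε1 hε2 m t hm ht => ?_⟩
  obtain ⟨hx1, hLr, h3a, h5, hexpγ⟩ := hn₀ n hn
  set x : ℝ := (n : ℝ) with hx_def
  set L : ℝ := Real.logb 2 x with hL_def
  set r : ℝ := Real.sqrt x with hr_def
  have hδ0 : (0:ℝ) < 1 - α := by linarith only [hα₂]
  have hx0 : (0:ℝ) ≤ x := by linarith only [hx1]
  have hr0 : (0:ℝ) < r := Real.sqrt_pos.mpr (by linarith only [hx1])
  have hr1 : (1:ℝ) ≤ r := by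
    have h' := Real.sqrt_le_sqrt hx1
    simpa [hr_def] using h'
  have hL0 : (0:ℝ) ≤ L := Real.logb_nonneg (by norm_num) hx1
  set u : ℝ := L / (8 * r) with hu_def
  have hu0 : 0 ≤ u := div_nonneg hL0 (by positivity)
  have hu8 : u ≤ 1/8 := by
    rw [hu_def, div_le_iff₀ (by positivity)]
    linarith only [hLr]
  have hru : r * u = L / 8 := by
    rw [hu_def]; field_simp
  have hr2 : r^2 = x := Real.sq_sqrt hx0
  have hδrL : (0:ℝ) ≤ (1-α) * (r * L) := by positivity
  have hδx1 : 1 ≤ (1-α) * x := by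
    rw [div_le_iff₀ hδ0] at h5
    linarith only [h5]
  -- bounds on m
  have hax : 2*(1-α)*x + (1-α)*(r*L) ≤ x := by
    have := aux_ax α x (r*L) hα₁ hx0 h3a
    linarith only [this]
  have hm_eq : m = ⌈2*(1-α)*x + (1-α)*(r*L)⌉₊ := by
    rw [hm]
    congr 1
    ring
  have ha0 : (0:ℝ) ≤ 2*(1-α)*x + (1-α)*(r*L) := by positivity
  have hm_lb : 2*(1-α)*x + (1-α)*(r*L) ≤ (m:ℝ) := hm_eq ▸ Nat.le_ceil _
  have hm_ub : (m:ℝ) ≤ 2*(1-α)*x + (1-α)*(r*L) + 1 := by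
    rw [hm_eq]
    exact le_of_lt (Nat.ceil_lt_add_one ha0)
  have hmn : m ≤ n := by
    rw [hm_eq]
    exact Nat.ceil_le.mpr hax
  have htn : t ≤ n := by omega
  have ht_real : (t:ℝ) = x - (m:ℝ) := by
    rw [ht, hx_def]
    push_cast [Nat.cast_sub hmn]
    ring
  set k : ℕ := ⌊α * x⌋₊ with hk_def
  have hαx0 : (0:ℝ) ≤ α * x := mul_nonneg (by linarith only [hα₁]) hx0
  have hk_ub : (k:ℝ) ≤ α * x := Nat.floor_le hαx0
  have hk_lb : α * x - 1 ≤ (k:ℝ) := by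
    have h' := Nat.lt_floor_add_one (α * x)
    rw [hk_def]
    linarith only [h']
  have hkn : k ≤ n := by
    have h0 : (0:ℝ) ≤ (1-α) * x := mul_nonneg (le_of_lt hδ0) hx0
    have h' : α * x ≤ x := by nlinarith [h0]
    have h'' := Nat.floor_le_floor h'
    rw [hk_def]
    simpa [hx_def] using h''
  have htk : t ≤ k := by
    have hcast : (t:ℝ) ≤ (k:ℝ) := by
      rw [ht_real]
      exact aux_tk α x (m:ℝ) (k:ℝ) (r*L) hδx1 hδrL hm_lb hk_lb
    exact_mod_cast hcast
  have hs_real : ((k - t : ℕ):ℝ) = (k:ℝ) - (x - (m:ℝ)) := by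
    rw [← ht_real]
    push_cast [Nat.cast_sub htk]
    ring
  have hs_lb : (1-α)*x + (1-α)*(r*L) - 1 ≤ ((k - t : ℕ):ℝ) :=
    aux_s_lb α x (m:ℝ) (k:ℝ) _ (r*L) hm_lb hk_lb hs_real
  have hs_ub : ((k - t : ℕ):ℝ) ≤ (m:ℝ) := by
    have h' : k - t ≤ m := by omega
    exact_mod_cast h'
  -- the exponent bound
  have hexp : (m:ℝ)*(u/2) - ((k - t : ℕ):ℝ)*(u - u^2) ≤ 1 - (1-α)*L^2/64 := by
    apply aux_exponent (1-α) L r u (m:ℝ) ((k - t : ℕ):ℝ) hδ0 hL0 hru hu0 hu8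
    · rw [hr2]; linarith only [hm_ub]
    · rw [hr2]; linarith only [hs_lb]
    · exact hs_ub
  -- probability parameters
  have hε0 : 0 < ε := lt_of_lt_of_le (Real.rpow_pos_of_pos (by norm_num) _) hε1
  have hρ0 : 0 ≤ ε / Real.sqrt x := le_of_lt (div_pos hε0 hr0)
  have hρ1 : ε / Real.sqrt x ≤ 1 := by
    rw [div_le_one hr0]
    linarith only [hε2, hr1]
  -- compl card
  have hmc : ∀ M : Finset (Fin n), M.card = t → (Mᶜ).card = m := by
    intro M hM
    rw [Finset.card_compl, hM, Fintype.card_fin, ht, Nat.sub_sub_self hmn]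
  -- assemble
  unfold prD
  have hchoose : (0:ℝ) < (n.choose t : ℝ) := by
    exact_mod_cast Nat.choose_pos htn
  rw [le_div_iff₀ hchoose]
  have hcardfilter : (Finset.univ.filter (fun M : Finset (Fin n) => M.card = t)).card
      = n.choose t := by
    have he : Finset.univ.filter (fun M : Finset (Fin n) => M.card = t)
        = Finset.powersetCard t (Finset.univ : Finset (Fin n)) := by
      rw [Finset.powersetCard_eq_filter, Finset.powerset_univ]
    rw [he, Finset.card_powersetCard, Finset.card_univ, Fintype.card_fin]
  calc (1 - γ) * (n.choose t : ℝ)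
      = ∑ _M ∈ Finset.univ.filter (fun M : Finset (Fin n) => M.card = t), (1 - γ) := by
        rw [Finset.sum_const, hcardfilter, nsmul_eq_mul]; ring
    _ ≤ ∑ M ∈ Finset.univ.filter (fun M : Finset (Fin n) => M.card = t),
          ∑ A : Finset (Fin n), pSet Mᶜ (1/2) A * prSH n M A (ε / Real.sqrt x) (IsJunta n k) := by
        apply Finset.sum_le_sum
        intro M hM
        have hMt : M.card = t := (Finset.mem_filter.mp hM).2
        have hbound := per_M (k := k) M (hMt ▸ htk) hρ0 hρ1
          (lam := 1 + u) (by linarith only [hu0])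
        have hbad : ((1 + u + 1)/2) ^ (Mᶜ).card / (1 + u) ^ (k - M.card) ≤ γ := by
          rw [hmc M hMt, hMt]
          calc ((1 + u + 1)/2) ^ m / (1 + u) ^ (k - t)
              ≤ Real.exp ((m:ℝ)*(u/2) - ((k - t : ℕ):ℝ)*(u - u^2)) := chernoff_pow hu0 m (k - t)
            _ ≤ Real.exp (1 - (1-α)*L^2/64) := Real.exp_le_exp.mpr hexp
            _ ≤ γ := by
                have h9 : (1:ℝ) - (1-α)*L^2/64 = 1 - (1-α)*L^2/64 := rfl
                exact hexpγ
        linarith only [hbad, hbound]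
end

section
/- Let α ∈ (1/2, 1) be a constant and let c_α = −1/log₂(1.5 − α). For every γ > 0 there is n₀ ∈ ℕ such that for all n ≥ n₀, all reals ε with 2^{−(2α−1)n/2} ≤ ε ≤ 1/6, and every set X of at most (n/ε)² strings in {0,1}^n, the following holds: if M is a uniformly random subset of [n] of size t, then the probability that there exist x, y ∈ X whose Hamming distance is at least τ = ⌈5·c_α·log₂(n/ε)⌉ but whose restrictions to M coincide (x|_M = y|_M) is at most γ. -/
open Finset Real Asymptotics

lemma stepB (n τ t : ℕ) : (n - (τ+1)).choose t * n ≤ (n - τ).choose t * (n - t) := by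
  rcases Nat.eq_zero_or_pos (n - τ) with hs | hs
  · have h0 : n - (τ+1) = 0 := by omega
    rw [h0, hs]
    rcases Nat.eq_zero_or_pos t with ht | ht
    · subst ht; simp
    · simp [Nat.choose_eq_zero_of_lt ht]
  · obtain ⟨s', hseq⟩ : ∃ s', n - τ = s' + 1 := ⟨n - τ - 1, by omega⟩
    have hs1 : n - (τ+1) = s' := by omega
    have hid : s'.choose t * (s' + 1) = (s'+1).choose t * (s'+1 - t) :=
      Nat.choose_mul_succ_eq s' t
    have hsn : s' + 1 ≤ n := by omega
    have key : (s'+1 - t) * n ≤ (n - t) * (s'+1) := by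
      rcases le_or_gt t (s'+1) with ht | ht
      · rw [Nat.sub_mul, Nat.sub_mul]
        have h1 : (s'+1)*n = n*(s'+1) := Nat.mul_comm _ _
        have h2 : t*(s'+1) ≤ t*n := Nat.mul_le_mul le_rfl hsn
        omega
      · simp [Nat.sub_eq_zero_of_le ht.le]
    rw [hs1, hseq]
    refine Nat.le_of_mul_le_mul_right ?_ (Nat.succ_pos s')
    calc s'.choose t * n * (s'+1)
        = s'.choose t * (s'+1) * n := by ring
      _ = (s'+1).choose t * (s'+1-t) * n := by rw [hid]
      _ = (s'+1).choose t * ((s'+1-t) * n) := by ring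
      _ ≤ (s'+1).choose t * ((n-t) * (s'+1)) := Nat.mul_le_mul le_rfl key
      _ = (s'+1).choose t * (n-t) * (s'+1) := by ring

lemma lemA (n t : ℕ) : ∀ τ, (n - τ).choose t * n ^ τ ≤ n.choose t * (n - t) ^ τ := by
  intro τ
  induction τ with
  | zero => simp
  | succ τ ih =>
    calc (n - (τ+1)).choose t * n ^ (τ+1)
        = ((n - (τ+1)).choose t * n) * n ^ τ := by ring
      _ ≤ ((n - τ).choose t * (n - t)) * n ^ τ := Nat.mul_le_mul (stepB n τ t) le_rfl
      _ = (n - t) * ((n - τ).choose t * n ^ τ) := by ring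
      _ ≤ (n - t) * (n.choose t * (n - t) ^ τ) := Nat.mul_le_mul le_rfl ih
      _ = n.choose t * (n - t) ^ (τ+1) := by ring

lemma countBound (n t τ : ℕ) (X : Finset (Fin n → Bool)) :
    ((Finset.univ.filter (fun M : Finset (Fin n) => M.card = t ∧
        ∃ x ∈ X, ∃ y ∈ X, τ ≤ hammingDist x y ∧ ∀ i ∈ M, x i = y i)).card)
      ≤ X.card * X.card * (n - τ).choose t := by
  classical
  set A : (Fin n → Bool) × (Fin n → Bool) → Finset (Finset (Fin n)) :=
    fun p => Finset.univ.filter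
      (fun M => M.card = t ∧ τ ≤ hammingDist p.1 p.2 ∧ ∀ i ∈ M, p.1 i = p.2 i) with hA
  have hsub : (Finset.univ.filter (fun M : Finset (Fin n) => M.card = t ∧
        ∃ x ∈ X, ∃ y ∈ X, τ ≤ hammingDist x y ∧ ∀ i ∈ M, x i = y i))
      ⊆ (X ×ˢ X).biUnion A := by
    intro M hM
    simp only [mem_filter, mem_univ, true_and] at hM
    obtain ⟨hc, x, hx, y, hy, hd, hxy⟩ := hM
    exact mem_biUnion.2 ⟨(x,y), mem_product.2 ⟨hx,hy⟩, by
      simp only [hA, mem_filter, mem_univ, true_and]; exact ⟨hc, hd, hxy⟩⟩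
  have hAcard : ∀ p ∈ X ×ˢ X, (A p).card ≤ (n - τ).choose t := by
    intro p _
    by_cases hd : τ ≤ hammingDist p.1 p.2
    · have hsub2 : A p ⊆ ({i | p.1 i ≠ p.2 i} : Finset (Fin n))ᶜ.powersetCard t := by
        intro M hM
        simp only [hA, mem_filter, mem_univ, true_and] at hM
        refine mem_powersetCard.2 ⟨fun i hi => ?_, hM.1⟩
        simp only [mem_compl, mem_filter, mem_univ, true_and, not_not]
        exact hM.2.2 i hi
      refine (card_le_card hsub2).trans ?_
      rw [card_powersetCard, card_compl]
      refine Nat.choose_le_choose t ?_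
      have hhd : ({i | p.1 i ≠ p.2 i} : Finset (Fin n)).card = hammingDist p.1 p.2 := rfl
      rw [hhd]
      simp only [Fintype.card_fin]
      omega
    · have hAe : A p = ∅ := by
        rw [hA, filter_eq_empty_iff]
        exact fun M _ h => hd h.2.1
      simp [hAe]
  calc (Finset.univ.filter (fun M : Finset (Fin n) => M.card = t ∧
        ∃ x ∈ X, ∃ y ∈ X, τ ≤ hammingDist x y ∧ ∀ i ∈ M, x i = y i)).card
      ≤ ((X ×ˢ X).biUnion A).card := card_le_card hsub
    _ ≤ ∑ p ∈ X ×ˢ X, (A p).card := card_biUnion_le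
    _ ≤ (X ×ˢ X).card * (n - τ).choose t := by
        refine (Finset.sum_le_card_nsmul _ _ _ hAcard).trans ?_
        simp [mul_comm]
    _ = X.card * X.card * (n - τ).choose t := by rw [card_product]

lemma eventuallyCond (α γ : ℝ) (hα₁ : 1/2 < α) (hα₂ : α < 1) (hγ : 0 < γ) :
    ∀ᶠ n : ℕ in Filter.atTop, 1 ≤ n ∧
      (1 - α) * Real.sqrt n * Real.logb 2 n + 1 ≤ (α - 1/2) * n ∧
      1 / (6 * (n:ℝ)) ≤ γ := by
  have h12 : (0:ℝ) < 1/2 := by norm_num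
  set c0 : ℝ := (α - 1/2)/2 with hc0
  have hc0pos : 0 < c0 := by rw [hc0]; linarith
  have h1a : 0 < 1 - α := by linarith
  have hlog2 : 0 < Real.log 2 := Real.log_pos one_lt_two
  set c : ℝ := c0 * Real.log 2 / (1 - α) with hc
  have hcpos : 0 < c := div_pos (mul_pos hc0pos hlog2) h1a
  have hlo := (isLittleO_log_rpow_atTop h12).def hcpos
  have hreal : ∀ᶠ x : ℝ in Filter.atTop,
      ((1-α)*Real.sqrt x*Real.logb 2 x + 1 ≤ (α-1/2)*x ∧ 1/(6*x) ≤ γ) := by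
    filter_upwards [hlo, Filter.eventually_ge_atTop (max 1 (max (1/c0) (1/(6*γ))))]
      with x hx hx'
    have hx1 : (1:ℝ) ≤ x := le_trans (le_max_left _ _) hx'
    have hxc0 : 1/c0 ≤ x := le_trans (le_trans (le_max_left _ _) (le_max_right _ _)) hx'
    have hxg : 1/(6*γ) ≤ x := le_trans (le_trans (le_max_right _ _) (le_max_right _ _)) hx'
    have hx0 : (0:ℝ) ≤ x := le_trans zero_le_one hx1
    have hlog : Real.log x ≤ c * x ^ ((1:ℝ)/2) := by
      rw [Real.norm_eq_abs, Real.norm_eq_abs,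
        abs_of_nonneg (Real.rpow_nonneg hx0 _)] at hx
      exact le_trans (le_abs_self _) hx
    have hsq : Real.sqrt x * x ^ ((1:ℝ)/2) = x := by
      rw [← Real.sqrt_eq_rpow]; exact Real.mul_self_sqrt hx0
    have hlb : Real.logb 2 x = Real.log x / Real.log 2 := rfl
    have hs0 : 0 ≤ Real.sqrt x := Real.sqrt_nonneg x
    have key : (1-α)*Real.sqrt x*Real.logb 2 x ≤ c0 * x := by
      rw [hlb]
      have step : (1-α)*Real.sqrt x*(Real.log x / Real.log 2)
          ≤ (1-α)*Real.sqrt x*((c * x ^ ((1:ℝ)/2)) / Real.log 2) := by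
        gcongr
      refine step.trans (le_of_eq ?_)
      calc (1-α)*Real.sqrt x*((c * x ^ ((1:ℝ)/2)) / Real.log 2)
          = c0 * (Real.sqrt x * x ^ ((1:ℝ)/2)) := by
            rw [hc]; field_simp
        _ = c0 * x := by rw [hsq]
    constructor
    · have h1c0x : 1 ≤ c0 * x := by
        have h := mul_le_mul_of_nonneg_left hxc0 hc0pos.le
        rwa [mul_one_div, div_self (ne_of_gt hc0pos)] at h
      have heq : (α-1/2)*x = c0*x + c0*x := by rw [hc0]; ring
      linarith [key]
    · have h6x : 0 < 6*x := by linarith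
      rw [div_le_iff₀ h6x]
      have h := mul_le_mul_of_nonneg_left hxg (by positivity : (0:ℝ) ≤ 6*γ)
      rw [mul_one_div, div_self (by positivity : (6*γ) ≠ 0)] at h
      nlinarith
  have hnat := tendsto_natCast_atTop_atTop.eventually hreal
  filter_upwards [hnat, Filter.eventually_ge_atTop 1] with n h1 h2
  exact ⟨h2, h1.1, h1.2⟩

theorem stmt8 (α : ℝ) (hα₁ : 1 / 2 < α) (hα₂ : α < 1) (γ : ℝ) (hγ : 0 < γ) :
    ∃ n₀ : ℕ, ∀ (n : ℕ) (ε : ℝ) (X : Finset (Fin n → Bool)),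
      n₀ ≤ n →
      (2 : ℝ) ^ (-((2 * α - 1) * (n : ℝ) / 2)) ≤ ε → ε ≤ 1 / 6 →
      (X.card : ℝ) ≤ ((n : ℝ) / ε) ^ 2 →
      ∀ m t τ : ℕ,
        m = ⌈2 * (1 - α) * (n : ℝ) + (1 - α) * Real.sqrt n * Real.logb 2 n⌉₊ →
        t = n - m →
        τ = ⌈5 * (-1 / Real.logb 2 (1.5 - α)) * Real.logb 2 ((n : ℝ) / ε)⌉₊ →
        ((Finset.univ.filter (fun M : Finset (Fin n) => M.card = t ∧
            ∃ x ∈ X, ∃ y ∈ X, τ ≤ hammingDist x y ∧ ∀ i ∈ M, x i = y i)).card : ℝ) /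
          (n.choose t : ℝ) ≤ γ := by
  obtain ⟨n₀, hn₀⟩ := Filter.eventually_atTop.1 (eventuallyCond α γ hα₁ hα₂ hγ)
  refine ⟨n₀, ?_⟩
  intro n ε X hn hεlow hεhi hX m t τ hm ht hτ
  obtain ⟨hn1, hE1, hE2⟩ := hn₀ n hn
  have hnR : (1:ℝ) ≤ (n:ℝ) := by exact_mod_cast hn1
  have hnpos : (0:ℝ) < (n:ℝ) := lt_of_lt_of_le zero_lt_one hnR
  have hεpos : 0 < ε :=
    lt_of_lt_of_le (Real.rpow_pos_of_pos two_pos _) hεlow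
  have h15 : (1.5:ℝ) = 3/2 := by norm_num
  have hβpos : (0:ℝ) < 1.5 - α := by rw [h15]; linarith
  have hβlt1 : (1.5:ℝ) - α < 1 := by rw [h15]; linarith
  have h1a : (0:ℝ) ≤ 1 - α := by linarith
  -- bound on m
  have hx0 : 0 ≤ 2*(1-α)*(n:ℝ) + (1-α)*Real.sqrt n*Real.logb 2 n := by
    have t1 : (0:ℝ) ≤ 2*(1-α)*(n:ℝ) :=
      mul_nonneg (mul_nonneg (by norm_num) h1a) hnpos.le
    have t2 : (0:ℝ) ≤ (1-α)*Real.sqrt n*Real.logb 2 n :=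
      mul_nonneg (mul_nonneg h1a (Real.sqrt_nonneg _)) (Real.logb_nonneg one_lt_two hnR)
    linarith
  have hmlt : (m:ℝ) < 2*(1-α)*(n:ℝ) + (1-α)*Real.sqrt n*Real.logb 2 n + 1 := by
    rw [hm]; exact Nat.ceil_lt_add_one hx0
  have expand : ((1.5:ℝ) - α) * (n:ℝ) = 2*(1-α)*(n:ℝ) + (α-1/2)*(n:ℝ) := by
    rw [h15]; ring
  have hmβ : (m:ℝ) ≤ (1.5 - α)*(n:ℝ) := by
    rw [expand]; linarith [hmlt, hE1]
  have hmltn : (m:ℝ) < (n:ℝ) := by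
    calc (m:ℝ) ≤ (1.5-α)*(n:ℝ) := hmβ
      _ < 1*(n:ℝ) := by exact mul_lt_mul_of_pos_right hβlt1 hnpos
      _ = (n:ℝ) := one_mul _
  have hmn : m < n := by exact_mod_cast hmltn
  have htn : t ≤ n := by omega
  have hnt : n - t = m := by omega
  -- counting bound
  have hcount := countBound n t τ X
  have hcountR : ((Finset.univ.filter (fun M : Finset (Fin n) => M.card = t ∧
      ∃ x ∈ X, ∃ y ∈ X, τ ≤ hammingDist x y ∧ ∀ i ∈ M, x i = y i)).card : ℝ)
      ≤ (X.card:ℝ)*(X.card:ℝ)*(((n-τ).choose t : ℕ):ℝ) := by exact_mod_cast hcount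
  have hA := lemA n t τ
  rw [hnt] at hA
  have hAR : (((n-τ).choose t : ℕ):ℝ) * (n:ℝ)^τ ≤ (n.choose t : ℝ) * (m:ℝ)^τ := by
    exact_mod_cast hA
  have hCpos : (0:ℝ) < (n.choose t : ℝ) := by exact_mod_cast Nat.choose_pos htn
  have hratio : (((n-τ).choose t : ℕ):ℝ) / (n.choose t : ℝ) ≤ ((m:ℝ)/(n:ℝ))^τ := by
    rw [div_pow, div_le_div_iff₀ hCpos (pow_pos hnpos τ)]
    calc (((n-τ).choose t : ℕ):ℝ) * (n:ℝ)^τ ≤ (n.choose t:ℝ) * (m:ℝ)^τ := hAR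
      _ = (m:ℝ)^τ * (n.choose t:ℝ) := mul_comm _ _
  have hmdiv : (m:ℝ)/(n:ℝ) ≤ 1.5 - α := (div_le_iff₀ hnpos).2 hmβ
  have hpow1 : ((m:ℝ)/(n:ℝ))^τ ≤ (1.5-α)^τ := pow_le_pow_left₀ (by positivity) hmdiv τ
  -- power bound via rpow
  set L := Real.logb 2 (1.5 - α) with hL
  have hLneg : L < 0 := Real.logb_neg one_lt_two hβpos hβlt1
  have hnε1 : (1:ℝ) ≤ (n:ℝ)/ε := (one_le_div hεpos).2 (by linarith)
  have hG0 : 0 ≤ Real.logb 2 ((n:ℝ)/ε) := Real.logb_nonneg one_lt_two hnε1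
  have hτge : 5 * (-1/L) * Real.logb 2 ((n:ℝ)/ε) ≤ (τ:ℝ) := by
    rw [hτ]; exact Nat.le_ceil _
  have hεn : (0:ℝ) < ε/(n:ℝ) := div_pos hεpos hnpos
  have hexp : L * (τ:ℝ) ≤ Real.logb 2 (ε/(n:ℝ)) * 5 := by
    have hne : L ≠ 0 := ne_of_lt hLneg
    have h1 := mul_le_mul_of_nonpos_right hτge hLneg.le
    have h2 : (5*(-1/L)*Real.logb 2 ((n:ℝ)/ε))*L = -(5*Real.logb 2 ((n:ℝ)/ε)) := by
      field_simp
    have h3 : Real.logb 2 (ε/(n:ℝ)) = - Real.logb 2 ((n:ℝ)/ε) := by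
      rw [← Real.logb_inv, inv_div]
    rw [h3]; linarith [h1, h2]
  have hpow2 : ((1.5:ℝ)-α)^τ ≤ (ε/(n:ℝ))^5 := by
    have hβrw : ((1.5:ℝ) - α) = (2:ℝ) ^ L :=
      (Real.rpow_logb two_pos (by norm_num) hβpos).symm
    have h5 : ((5:ℕ):ℝ) = (5:ℝ) := by norm_num
    calc ((1.5:ℝ)-α)^τ = ((2:ℝ)^L)^(τ:ℕ) := by rw [← hβrw]
      _ = (2:ℝ)^(L*(τ:ℝ)) := by
          rw [← Real.rpow_natCast ((2:ℝ)^L) τ, ← Real.rpow_mul (by norm_num : (0:ℝ) ≤ 2)]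
      _ ≤ (2:ℝ)^(Real.logb 2 (ε/(n:ℝ)) * 5) := Real.rpow_le_rpow_of_exponent_le one_le_two hexp
      _ = (ε/(n:ℝ))^(5:ℕ) := by
          rw [Real.rpow_mul (by norm_num : (0:ℝ) ≤ 2),
            Real.rpow_logb two_pos (by norm_num) hεn, ← h5, Real.rpow_natCast]
  have hX0 : (0:ℝ) ≤ (X.card:ℝ) := Nat.cast_nonneg _
  have hX2 : (X.card:ℝ)*(X.card:ℝ) ≤ ((n:ℝ)/ε)^4 := by
    calc (X.card:ℝ)*(X.card:ℝ) ≤ (((n:ℝ)/ε)^2)*(((n:ℝ)/ε)^2) :=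
          mul_le_mul hX hX hX0 (by positivity)
      _ = ((n:ℝ)/ε)^4 := by ring
  calc ((Finset.univ.filter (fun M : Finset (Fin n) => M.card = t ∧
            ∃ x ∈ X, ∃ y ∈ X, τ ≤ hammingDist x y ∧ ∀ i ∈ M, x i = y i)).card : ℝ) /
          (n.choose t : ℝ)
      ≤ ((X.card:ℝ)*(X.card:ℝ)*(((n-τ).choose t : ℕ):ℝ)) / (n.choose t : ℝ) := by
        gcongr
    _ = ((X.card:ℝ)*(X.card:ℝ)) * ((((n-τ).choose t : ℕ):ℝ) / (n.choose t : ℝ)) := by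
        ring
    _ ≤ (((n:ℝ)/ε)^4) * ((ε/(n:ℝ))^5) := by
        refine mul_le_mul hX2 (hratio.trans (hpow1.trans hpow2)) (by positivity) (by positivity)
    _ = ε/(n:ℝ) := by field_simp
    _ ≤ (1/6)/(n:ℝ) := by gcongr
    _ ≤ γ := by
        have heq : (1/6:ℝ)/(n:ℝ) = 1/(6*(n:ℝ)) := by ring
        linarith [hE2]
end

section
/- There exist constants c > 0 and n₀ ∈ ℕ such that for all n ≥ n₀ and all reals ε with 2^{−n} ≤ ε ≤ 1/5, the following holds: every randomized non-adaptive q-query algorithm on n-variable Boolean functions that accepts the all-zero function with probability at least 5/6 and rejects every function that is ε-far from every (n−1)-junta with probability at least 5/6 must satisfy q ≥ c/ε. -/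
/-- A randomized non-adaptive `q`-query algorithm on `n`-variable Boolean functions:
a probability distribution over pairs `(X, h)` with `X` a tuple of `q` query strings
and `h` a map from the `q` answer bits to accept (`true`) / reject (`false`). -/
structure RandNonAdaptive (n q : ℕ) where
  w : ((Fin q → (Fin n → Bool)) × ((Fin q → Bool) → Bool)) → ℝ
  nonneg : ∀ p, 0 ≤ w p
  sum_eq_one : ∑ p, w p = 1

/-- Probability that the algorithm accepts `f`. -/
def acceptProb {n q : ℕ} (A : RandNonAdaptive n q) (f : (Fin n → Bool) → Bool) : ℝ :=
  ∑ p, if p.2 (fun i => f (p.1 i)) = true then A.w p else 0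

/-- Probability that the algorithm rejects `f`. -/
def rejectProb {n q : ℕ} (A : RandNonAdaptive n q) (f : (Fin n → Bool) → Bool) : ℝ :=
  ∑ p, if p.2 (fun i => f (p.1 i)) = false then A.w p else 0

/-- An `ε`-tester for `k`-juntas: accepts every `k`-junta with probability ≥ 5/6 and
rejects every function that is `ε`-far from every `k`-junta with probability ≥ 5/6. -/
def IsJuntaTester (n k q : ℕ) (ε : ℝ) (A : RandNonAdaptive n q) : Prop :=
  (∀ f, IsJunta n k f → 5 / 6 ≤ acceptProb A f) ∧
  (∀ f, FarFromJuntas n k ε f → 5 / 6 ≤ rejectProb A f)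

section Aux

variable {n : ℕ}

/-- Parity of a Boolean vector, as an element of `ZMod 2`. -/
def parityFn (x : Fin n → Bool) : ZMod 2 := ∑ i, if x i then 1 else 0

/-- Flip coordinate `i`. -/
def flipAt (i : Fin n) (x : Fin n → Bool) : Fin n → Bool := Function.update x i (!x i)

lemma flipAt_apply_ne {i j : Fin n} (x : Fin n → Bool) (h : j ≠ i) : flipAt i x j = x j :=
  Function.update_of_ne h _ _

lemma flipAt_flipAt (i : Fin n) (x : Fin n → Bool) : flipAt i (flipAt i x) = x := by
  funext j
  by_cases h : j = i
  · subst h; simp [flipAt]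
  · rw [flipAt_apply_ne _ h, flipAt_apply_ne _ h]

lemma if_not_bool (b : Bool) : (if !b then (1:ZMod 2) else 0) = (if b then 1 else 0) + 1 := by
  cases b <;> decide

lemma parityFn_flipAt (i : Fin n) (x : Fin n → Bool) :
    parityFn (flipAt i x) = parityFn x + 1 := by
  unfold parityFn
  rw [← Finset.add_sum_erase _ _ (Finset.mem_univ i),
      ← Finset.add_sum_erase _ (fun j => if x j then (1:ZMod 2) else 0) (Finset.mem_univ i)]
  have h1 : ∑ j ∈ Finset.univ.erase i, (if flipAt i x j then (1:ZMod 2) else 0)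
      = ∑ j ∈ Finset.univ.erase i, (if x j then (1:ZMod 2) else 0) :=
    Finset.sum_congr rfl (fun j hj => by rw [flipAt_apply_ne x (Finset.ne_of_mem_erase hj)])
  rw [h1]
  have h2 : flipAt i x i = !x i := by simp [flipAt]
  rw [h2, if_not_bool]
  ring

lemma if_xor_bool (a b : Bool) :
    (if xor a b then (1:ZMod 2) else 0) = (if a then 1 else 0) + (if b then 1 else 0) := by
  cases a <;> cases b <;> decide

lemma parityFn_xor (x z : Fin n → Bool) :
    parityFn (fun i => xor (x i) (z i)) = parityFn x + parityFn z := by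
  unfold parityFn
  rw [← Finset.sum_add_distrib]
  exact Finset.sum_congr rfl fun i _ => if_xor_bool (x i) (z i)

lemma zmod2_cases : ∀ a : ZMod 2, a ≠ 0 → a = 1 := by decide

lemma zmod2_add_one_ne (a : ZMod 2) : a + 1 ≠ a := by revert a; decide

lemma zmod2_eq_of_add_eq_zero : ∀ a b : ZMod 2, a + b = 0 → a = b := by decide

lemma card_parityZero (hn : 1 ≤ n) :
    (Finset.univ.filter (fun x : Fin n → Bool => parityFn x = 0)).card = 2 ^ (n - 1) := by
  set i : Fin n := ⟨0, hn⟩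
  have hbij : (Finset.univ.filter (fun x : Fin n → Bool => parityFn x = 0)).card
      = (Finset.univ.filter (fun x : Fin n → Bool => ¬ parityFn x = 0)).card := by
    apply Finset.card_bij (fun x _ => flipAt i x)
    · intro x hx
      simp only [Finset.mem_filter, Finset.mem_univ, true_and] at hx ⊢
      rw [parityFn_flipAt, hx]; decide
    · intro x hx y hy h
      have := congrArg (flipAt i) h
      rwa [flipAt_flipAt, flipAt_flipAt] at this
    · intro y hy
      simp only [Finset.mem_filter, Finset.mem_univ, true_and] at hy
      refine ⟨flipAt i y, ?_, flipAt_flipAt i y⟩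
      simp only [Finset.mem_filter, Finset.mem_univ, true_and]
      rw [parityFn_flipAt, zmod2_cases _ hy]; decide
  have htot := Finset.card_filter_add_card_filter_not
    (s := (Finset.univ : Finset (Fin n → Bool))) (p := fun x => parityFn x = 0)
  have hcard : (Finset.univ : Finset (Fin n → Bool)).card = 2 ^ n := by
    simp [Finset.card_univ]
  rw [hcard, ← hbij] at htot
  have h2n : 2 ^ n = 2 ^ (n - 1) * 2 := by
    rw [← pow_succ]; congr 1; omega
  omega

lemma bool_xor_cancel_right (a b : Bool) : xor (xor a b) b = a := by cases a <;> cases b <;> rfl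

/-- The shift of `E` by `z` (coordinatewise xor). -/
def shiftSet (E : Finset (Fin n → Bool)) (z : Fin n → Bool) : Finset (Fin n → Bool) :=
  E.image (fun e => fun i => xor (e i) (z i))

lemma mem_shiftSet {E : Finset (Fin n → Bool)} {z x : Fin n → Bool} :
    x ∈ shiftSet E z ↔ (fun i => xor (x i) (z i)) ∈ E := by
  simp only [shiftSet, Finset.mem_image]
  constructor
  · rintro ⟨e, he, rfl⟩
    have : (fun i => xor (xor (e i) (z i)) (z i)) = e := by
      funext i; exact bool_xor_cancel_right _ _
    rwa [this]
  · intro h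
    exact ⟨_, h, by funext i; exact bool_xor_cancel_right _ _⟩

lemma card_shiftSet (E : Finset (Fin n → Bool)) (z : Fin n → Bool) :
    (shiftSet E z).card = E.card := by
  apply Finset.card_image_of_injective
  intro a b h
  funext i
  have := congrFun h i
  simp only [] at this
  have h2 : xor (xor (a i) (z i)) (z i) = xor (xor (b i) (z i)) (z i) := by rw [this]
  rwa [bool_xor_cancel_right, bool_xor_cancel_right] at h2

lemma card_hit (E : Finset (Fin n → Bool)) (x : Fin n → Bool) :
    (Finset.univ.filter (fun z : Fin n → Bool => x ∈ shiftSet E z)).card = E.card := by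
  apply Finset.card_bij (fun z _ => fun i => xor (x i) (z i))
  · intro z hz
    simp only [Finset.mem_filter, Finset.mem_univ, true_and] at hz
    exact mem_shiftSet.mp hz
  · intro a ha b hb h
    funext i
    have := congrFun h i
    have h2 : xor (x i) (xor (x i) (a i)) = xor (x i) (xor (x i) (b i)) := by rw [this]
    simpa [← Bool.xor_assoc] using h2
  · intro e he
    refine ⟨fun i => xor (x i) (e i), ?_, ?_⟩
    · simp only [Finset.mem_filter, Finset.mem_univ, true_and]
      rw [mem_shiftSet]
      have : (fun i => xor (x i) (xor (x i) (e i))) = e := by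
        funext i; simp [← Bool.xor_assoc]
      rwa [this]
    · funext i; simp [← Bool.xor_assoc]

lemma parityFn_of_mem_shiftSet {E : Finset (Fin n → Bool)} {z t : Fin n → Bool}
    (hE : ∀ e ∈ E, parityFn e = 0) (ht : t ∈ shiftSet E z) : parityFn t = parityFn z := by
  have h := hE _ (mem_shiftSet.mp ht)
  rw [parityFn_xor] at h
  exact zmod2_eq_of_add_eq_zero _ _ h

/-- The shifted indicator function is `ε`-far from `(n-1)`-juntas. -/
lemma far_shift {n : ℕ} (hn : 2 ≤ n) (ε : ℝ) (E : Finset (Fin n → Bool))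
    (hE : ∀ e ∈ E, parityFn e = 0) (hm : ε * 2 ^ n ≤ (E.card : ℝ)) (z : Fin n → Bool) :
    FarFromJuntas n (n - 1) ε (fun x => decide (x ∈ shiftSet E z)) := by
  intro g hg
  obtain ⟨S, hScard, hgS⟩ := hg
  -- find a coordinate not in S
  have hi : ∃ i : Fin n, i ∉ S := by
    by_contra hc
    push_neg at hc
    have : S = Finset.univ := Finset.eq_univ_iff_forall.mpr hc
    have : S.card = n := by rw [this, Finset.card_univ]; simp
    omega
  obtain ⟨i, hiS⟩ := hi
  set T := shiftSet E z with hT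
  set f : (Fin n → Bool) → Bool := fun x => decide (x ∈ T) with hf
  -- flipping coordinate i moves out of T
  have hflip_notmem : ∀ t ∈ T, flipAt i t ∉ T := by
    intro t ht hmem
    have h1 := parityFn_of_mem_shiftSet hE ht
    have h2 := parityFn_of_mem_shiftSet hE hmem
    rw [parityFn_flipAt, h1] at h2
    exact zmod2_add_one_ne _ h2
  -- g agrees on t and flipAt i t
  have hg_flip : ∀ t : Fin n → Bool, g (flipAt i t) = g t := by
    intro t
    apply hgS
    intro j hj
    exact flipAt_apply_ne t (fun h => hiS (h ▸ hj))
  set D := Finset.univ.filter (fun x => f x ≠ g x) with hD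
  have hcard : T.card ≤ D.card := by
    apply Finset.card_le_card_of_injOn (fun t => if g t then flipAt i t else t)
    · intro t ht
      simp only [hD, Finset.mem_coe, Finset.mem_filter, Finset.mem_univ, true_and]
      by_cases hgt : g t
      · rw [if_pos hgt]
        have : f (flipAt i t) = false := by
          simp only [hf, decide_eq_false_iff_not]
          exact hflip_notmem t ht
        rw [this, hg_flip, hgt]
        simp
      · rw [if_neg hgt]
        have : f t = true := by simp only [hf, decide_eq_true_eq]; exact ht
        rw [this]
        simp only [ne_eq]
        intro h
        exact hgt (h.symm)
    · intro t1 ht1 t2 ht2 heq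
      simp only [] at heq
      simp only [Finset.coe_mem, Finset.mem_coe] at ht1 ht2
      by_cases h1 : g t1 <;> by_cases h2 : g t2
      · rw [if_pos h1, if_pos h2] at heq
        have := congrArg (flipAt i) heq
        rwa [flipAt_flipAt, flipAt_flipAt] at this
      · rw [if_pos h1, if_neg h2] at heq
        exfalso
        apply hflip_notmem t1 ht1
        rw [heq]; exact ht2
      · rw [if_neg h1, if_pos h2] at heq
        exfalso
        apply hflip_notmem t2 ht2
        rw [← heq]; exact ht1
      · rwa [if_neg h1, if_neg h2] at heq
  calc ε * 2 ^ n ≤ (E.card : ℝ) := hm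
    _ = (T.card : ℝ) := by rw [card_shiftSet]
    _ ≤ (D.card : ℝ) := by exact_mod_cast hcard

end Aux

theorem stmt15 :
    ∃ (c : ℝ) (n₀ : ℕ), 0 < c ∧
      ∀ (n q : ℕ) (ε : ℝ) (A : RandNonAdaptive n q),
        n₀ ≤ n → (2 : ℝ) ^ (-(n : ℝ)) ≤ ε → ε ≤ 1 / 5 →
        5 / 6 ≤ acceptProb A (fun _ => false) →
        (∀ f, FarFromJuntas n (n - 1) ε f → 5 / 6 ≤ rejectProb A f) →
        c / ε ≤ (q : ℝ) := by
  refine ⟨1/3, 2, by norm_num, ?_⟩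
  intro n q ε A hn hε1 hε2 hacc hrej
  have h2npos : (0:ℝ) < 2 ^ n := by positivity
  have hεpos : 0 < ε := lt_of_lt_of_le (by positivity) hε1
  -- ε * 2^n ≥ 1
  have hε2n : (1:ℝ) ≤ ε * 2 ^ n := by
    have hrw : (2:ℝ) ^ (-(n:ℝ)) = ((2:ℝ) ^ n)⁻¹ := by
      rw [Real.rpow_neg (by norm_num), Real.rpow_natCast]
    have := mul_le_mul_of_nonneg_right hε1 h2npos.le
    rwa [hrw, inv_mul_cancel₀ h2npos.ne'] at this
  -- choose E ⊆ parity-zero set with card m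
  set m : ℕ := ⌈ε * 2 ^ n⌉₊ with hm
  have hmle : m ≤ 2 ^ (n - 1) := by
    rw [hm, Nat.ceil_le]
    have h2n : (2:ℝ) ^ n = 2 * 2 ^ (n - 1) := by
      rw [← pow_succ']; congr 1; omega
    have hpow : (0:ℝ) ≤ (2:ℝ) ^ (n-1) := by positivity
    push_cast
    nlinarith
  obtain ⟨E, hEsub, hEcard⟩ := Finset.exists_subset_card_eq
    (s := Finset.univ.filter (fun x : Fin n → Bool => parityFn x = 0)) (n := m)
    (by rw [card_parityZero (by omega)]; exact hmle)
  have hE : ∀ e ∈ E, parityFn e = 0 := by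
    intro e he
    have := hEsub he
    simp only [Finset.mem_filter] at this
    exact this.2
  have hmlow : ε * 2 ^ n ≤ (E.card : ℝ) := by
    rw [hEcard]; exact Nat.le_ceil _
  have hmup : (E.card : ℝ) ≤ 2 * (ε * 2 ^ n) := by
    rw [hEcard]
    have := Nat.ceil_lt_add_one (a := ε * 2 ^ n) (by positivity)
    push_cast at this ⊢
    linarith
  -- per-z inequality
  have key : ∀ z : Fin n → Bool,
      (2/3 : ℝ) ≤ ∑ p, (if ∃ i, p.1 i ∈ shiftSet E z then A.w p else 0) := by
    intro z
    have hfar := hrej (fun x => decide (x ∈ shiftSet E z))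
      (far_shift hn ε E hE hmlow z)
    have hacc' : (5/6 : ℝ) ≤ ∑ p, (if p.2 (fun _ => false) = true then A.w p else 0) := by
      simpa [acceptProb] using hacc
    have hrej' : (5/6 : ℝ) ≤
        ∑ p, (if p.2 (fun i => decide (p.1 i ∈ shiftSet E z)) = false then A.w p else 0) := by
      simpa [rejectProb] using hfar
    have hpt : ∀ p : (Fin q → (Fin n → Bool)) × ((Fin q → Bool) → Bool),
        (if p.2 (fun _ => false) = true then A.w p else 0)
        + (if p.2 (fun i => decide (p.1 i ∈ shiftSet E z)) = false then A.w p else 0)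
        ≤ A.w p + (if ∃ i, p.1 i ∈ shiftSet E z then A.w p else 0) := by
      intro p
      by_cases hq : ∃ i, p.1 i ∈ shiftSet E z
      · rw [if_pos hq]
        have h1 : (if p.2 (fun _ => false) = true then A.w p else 0) ≤ A.w p := by
          split
          · exact le_refl _
          · exact A.nonneg p
        have h2 : (if p.2 (fun i => decide (p.1 i ∈ shiftSet E z)) = false
            then A.w p else 0) ≤ A.w p := by
          split
          · exact le_refl _
          · exact A.nonneg p
        linarith
      · rw [if_neg hq]
        push_neg at hq
        have hans : (fun i => decide (p.1 i ∈ shiftSet E z)) = (fun _ => false) := by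
          funext i
          simp [hq i]
        rw [hans]
        by_cases hb : p.2 (fun _ => false) = true
        · rw [if_pos hb, if_neg (by simp [hb])]
        · rw [if_neg hb]
          have : p.2 (fun _ => false) = false := by
            cases h : p.2 (fun _ => false)
            · rfl
            · exact absurd h hb
          rw [if_pos this]
          linarith [A.nonneg p]
    have hsum := Finset.sum_le_sum (s := (Finset.univ : Finset ((Fin q → Fin n → Bool) × ((Fin q → Bool) → Bool)))) (fun p _ => hpt p)
    rw [Finset.sum_add_distrib, Finset.sum_add_distrib, A.sum_eq_one] at hsum
    linarith
  -- sum over z and swap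
  have hcardz : (Finset.univ : Finset (Fin n → Bool)).card = 2 ^ n := by
    simp [Finset.card_univ]
  have htotal : (2/3 : ℝ) * 2 ^ n
      ≤ ∑ z : Fin n → Bool, ∑ p, (if ∃ i, p.1 i ∈ shiftSet E z then A.w p else 0) := by
    have := Finset.sum_le_sum (fun z (_ : z ∈ (Finset.univ : Finset (Fin n → Bool))) => key z)
    rw [Finset.sum_const, hcardz, nsmul_eq_mul] at this
    calc (2/3 : ℝ) * 2 ^ n = (2^n : ℕ) * (2/3 : ℝ) := by push_cast; ring
      _ ≤ _ := this
  rw [Finset.sum_comm] at htotal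
  have hupper : ∀ p : (Fin q → (Fin n → Bool)) × ((Fin q → Bool) → Bool),
      ∑ z : Fin n → Bool, (if ∃ i, p.1 i ∈ shiftSet E z then A.w p else 0)
      ≤ (q * m : ℕ) * A.w p := by
    intro p
    rw [← Finset.sum_filter, Finset.sum_const, nsmul_eq_mul]
    have hsub : (Finset.univ.filter (fun z : Fin n → Bool => ∃ i, p.1 i ∈ shiftSet E z))
        ⊆ Finset.univ.biUnion (fun i : Fin q =>
            Finset.univ.filter (fun z : Fin n → Bool => p.1 i ∈ shiftSet E z)) := by
      intro z hz
      simp only [Finset.mem_filter, Finset.mem_univ, true_and] at hz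
      obtain ⟨i, hi⟩ := hz
      simp only [Finset.mem_biUnion, Finset.mem_filter, Finset.mem_univ, true_and]
      exact ⟨i, hi⟩
    have hcb : (Finset.univ.filter
        (fun z : Fin n → Bool => ∃ i, p.1 i ∈ shiftSet E z)).card ≤ q * m := by
      calc _ ≤ (Finset.univ.biUnion (fun i : Fin q =>
              Finset.univ.filter (fun z : Fin n → Bool => p.1 i ∈ shiftSet E z))).card :=
            Finset.card_le_card hsub
        _ ≤ ∑ i : Fin q, (Finset.univ.filter
              (fun z : Fin n → Bool => p.1 i ∈ shiftSet E z)).card :=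
            Finset.card_biUnion_le
        _ = ∑ _i : Fin q, E.card := Finset.sum_congr rfl (fun i _ => card_hit E (p.1 i))
        _ = q * m := by rw [Finset.sum_const, Finset.card_univ, Fintype.card_fin,
              smul_eq_mul, hEcard]
    have := A.nonneg p
    have hcast : ((Finset.univ.filter
        (fun z : Fin n → Bool => ∃ i, p.1 i ∈ shiftSet E z)).card : ℝ) ≤ ((q * m : ℕ) : ℝ) := by
      exact_mod_cast hcb
    nlinarith
  have hfinal : (2/3 : ℝ) * 2 ^ n ≤ (q * m : ℕ) := by
    calc (2/3 : ℝ) * 2 ^ n ≤ _ := htotal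
      _ ≤ ∑ p, ((q * m : ℕ) : ℝ) * A.w p := Finset.sum_le_sum (fun p _ => hupper p)
      _ = ((q * m : ℕ) : ℝ) * ∑ p, A.w p := by rw [Finset.mul_sum]
      _ = ((q * m : ℕ) : ℝ) := by rw [A.sum_eq_one, mul_one]
  -- final arithmetic
  have hqm : ((q * m : ℕ) : ℝ) = (q : ℝ) * (E.card : ℝ) := by
    rw [hEcard]; push_cast; ring
  rw [hqm] at hfinal
  have hq0 : (0:ℝ) ≤ q := Nat.cast_nonneg q
  have hstep : (2/3 : ℝ) * 2 ^ n ≤ (q : ℝ) * (2 * (ε * 2 ^ n)) := by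
    calc (2/3 : ℝ) * 2 ^ n ≤ (q : ℝ) * (E.card : ℝ) := hfinal
      _ ≤ (q : ℝ) * (2 * (ε * 2 ^ n)) := by
          exact mul_le_mul_of_nonneg_left hmup hq0
  rw [div_le_iff₀ hεpos]
  nlinarith [hstep, h2npos]
end
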